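/- Let (W,S) be a Coxeter system and v, w, x, z ∈ W with v ≤ w and w = xz with ℓ(w) = ℓ(x) + ℓ(z). Then there exists x' ≤ x⁻¹ such that x' v ≤ z. -/

import Mathlib

namespace CoxeterPaper

open CoxeterSystem

variable {B : Type*} {W : Type*} [Group W] {M : CoxeterMatrix B}

/-- The Bruhat order on a Coxeter group: the reflexive-transitive closure of the
relation `a < a * t` for `t` a reflection with length increasing. -/
def BruhatLE (cs : CoxeterSystem M W) (x y : W) : Prop :=
  Relation.ReflTransGen
    (fun a b => (∃ t, cs.IsReflection t ∧ b = a * t) ∧ cs.length a < cs.length b) x y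

/-- One step of the Demazure product with a simple reflection. -/
noncomputable def demStep (cs : CoxeterSystem M W) (x : W) (i : B) : W :=
  if cs.length x < cs.length (x * cs.simple i) then x * cs.simple i else x

/-- The Demazure product of `x` with the word `l`. -/
noncomputable def demWord (cs : CoxeterSystem M W) (x : W) (l : List B) : W :=
  l.foldl (demStep cs) x

/-- The Demazure product (Coxeter monoid product) of two elements: fold the
Demazure action of a reduced word of `y` onto `x`. -/
noncomputable def dem (cs : CoxeterSystem M W) (x y : W) : W :=
  demWord cs x (Classical.choose (cs.exists_reduced_word y))

/-- The standard parabolic subgroup attached to a set of simple indices. -/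
def parabolic (cs : CoxeterSystem M W) (I : Set B) : Subgroup W :=
  Subgroup.closure (cs.simple '' I)

/-- `I` is finitary if the parabolic subgroup `W_I` is finite. -/
def Finitary (cs : CoxeterSystem M W) (I : Set B) : Prop :=
  (parabolic cs I : Set W).Finite

/-- The double coset `W_I w W_J` as a subset of `W`. -/
def doset (cs : CoxeterSystem M W) (I J : Set B) (w : W) : Set W :=
  {x | ∃ a ∈ parabolic cs I, ∃ b ∈ parabolic cs J, x = a * w * b}

/-- `p` is an `(I,J)`-double coset. -/
def IsDCoset (cs : CoxeterSystem M W) (I J : Set B) (p : Set W) : Prop :=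
  ∃ w, p = doset cs I J w

/-- `m` is the Bruhat-minimal element of `p`. -/
def IsMinOf (cs : CoxeterSystem M W) (p : Set W) (m : W) : Prop :=
  m ∈ p ∧ ∀ x ∈ p, BruhatLE cs m x

/-- `m` is the Bruhat-maximal element of `p`. -/
def IsMaxOf (cs : CoxeterSystem M W) (p : Set W) (m : W) : Prop :=
  m ∈ p ∧ ∀ x ∈ p, BruhatLE cs x m

/-- `[I 0, …, I d]` is a singlestep expression. -/
def IsSinglestep (I : ℕ → Set B) (d : ℕ) : Prop :=
  ∀ k < d, (∃ s, s ∉ I k ∧ I (k + 1) = insert s (I k)) ∨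
    (∃ s, s ∈ I k ∧ I (k + 1) = I k \ {s})

/-- `p` is a path subordinate to the singlestep expression `[I 0, …, I d]`. -/
def IsSubPath (cs : CoxeterSystem M W) (I : ℕ → Set B) (d : ℕ) (p : ℕ → Set W) : Prop :=
  p 0 = doset cs (I 0) (I 0) 1 ∧
  (∀ i ≤ d, IsDCoset cs (I 0) (I i) (p i)) ∧
  ∀ k < d, (I k ⊆ I (k + 1) → p k ⊆ p (k + 1)) ∧ (I (k + 1) ⊆ I k → p (k + 1) ⊆ p k)

/-- The Demazure product `w_{I_0} * w_{I_1} * ⋯ * w_{I_d}` of the longest elements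
`wI 0, …, wI d`. -/
noncomputable def exprMax (cs : CoxeterSystem M W) (wI : ℕ → W) (d : ℕ) : W :=
  ((List.range d).map fun k => wI (k + 1)).foldl (dem cs) (wI 0)

section Aux

open List Classical

noncomputable section

variable (cs : CoxeterSystem M W)

lemma swap_pow {G : Type*} [Group G] (x y : G) (a : ℕ) : (y*x)^a * y = y * (x*y)^a := by
  induction a with
  | zero => simp
  | succ n ih =>
      rw [pow_succ', mul_assoc, ih, pow_succ]
      simp only [mul_assoc]
      congr 1
      rw [← mul_assoc, ← pow_succ', ← pow_succ]

lemma swap_pow_conj {G : Type*} [Group G] (x y : G) (a : ℕ) :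
    (y*x)^a * y * (x*y)^a = (y*x)^(2*a) * y := by
  rw [two_mul, pow_add, mul_assoc, ← swap_pow, mul_assoc]

def reflMap (i : B) : W × ZMod 2 → W × ZMod 2 :=
  fun p => (cs.simple i * p.1 * cs.simple i,
    p.2 + if p.1 = cs.simple i then 1 else 0)

lemma simple_conj_eq_iff (i : B) (x y : W) :
    cs.simple i * x * cs.simple i = y ↔ x = cs.simple i * y * cs.simple i := by
  have hs := cs.simple_mul_simple_self i
  constructor
  · rintro rfl
    calc x = (cs.simple i * cs.simple i) * x * (cs.simple i * cs.simple i) := by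
              rw [hs]; group
      _ = cs.simple i * (cs.simple i * x * cs.simple i) * cs.simple i := by group
  · rintro rfl
    calc cs.simple i * (cs.simple i * y * cs.simple i) * cs.simple i
        = (cs.simple i * cs.simple i) * y * (cs.simple i * cs.simple i) := by group
      _ = y := by rw [hs]; group

lemma reflMap_involutive (i : B) : Function.Involutive (reflMap cs i) := by
  intro p
  unfold reflMap
  have hs := cs.simple_mul_simple_self i
  have h1 : cs.simple i * (cs.simple i * p.1 * cs.simple i) * cs.simple i = p.1 := by
    calc cs.simple i * (cs.simple i * p.1 * cs.simple i) * cs.simple i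
        = (cs.simple i * cs.simple i) * p.1 * (cs.simple i * cs.simple i) := by group
      _ = p.1 := by rw [hs]; group
  have h2 : (cs.simple i * p.1 * cs.simple i = cs.simple i) ↔ p.1 = cs.simple i := by
    rw [simple_conj_eq_iff, hs, one_mul]
  refine Prod.ext h1 ?_
  simp only
  by_cases hp : p.1 = cs.simple i
  · rw [if_pos (h2.mpr hp), if_pos hp]
    have : (1 : ZMod 2) + 1 = 0 := rfl
    rw [add_assoc, this, add_zero]
  · rw [if_neg (fun h => hp (h2.mp h)), if_neg hp, add_zero, add_zero]

def fPerm (i : B) : Equiv.Perm (W × ZMod 2) :=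
  (reflMap_involutive cs i).toPerm

lemma fPerm_apply (i : B) (p : W × ZMod 2) :
    fPerm cs i p = (cs.simple i * p.1 * cs.simple i,
      p.2 + if p.1 = cs.simple i then 1 else 0) := rfl

lemma sum_range_pair (g : ℕ → ZMod 2) (m : ℕ) :
    ∑ a ∈ Finset.range m, (g (2 * a) + g (2 * a + 1)) = ∑ e ∈ Finset.range (2 * m), g e := by
  induction m with
  | zero => simp
  | succ n ih =>
      rw [Finset.sum_range_succ, ih, mul_add, mul_one, ← add_assoc,
        Finset.sum_range_succ, Finset.sum_range_succ]

lemma sum_range_split (g : ℕ → ZMod 2) (m n : ℕ) :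
    ∑ e ∈ Finset.range (m + n), g e
      = ∑ e ∈ Finset.range m, g e + ∑ e ∈ Finset.range n, g (m + e) := by
  induction n with
  | zero => simp
  | succ n ih => rw [← add_assoc, Finset.sum_range_succ, ih, Finset.sum_range_succ, add_assoc]

lemma zmod2_add_self : ∀ x : ZMod 2, x + x = 0 := by decide

/-- Indicator used in the permutation representation. -/
def chi (i j : B) (u : W) : ZMod 2 :=
  (if u = cs.simple j then 1 else 0) +
    (if u = cs.simple j * cs.simple i * cs.simple j then 1 else 0)

lemma fPerm_mul_apply (i j : B) (t : W) (ε : ZMod 2) :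
    (fPerm cs i * fPerm cs j) (t, ε)
      = ((cs.simple i * cs.simple j) * t * (cs.simple j * cs.simple i),
          ε + chi cs i j t) := by
  show fPerm cs i (fPerm cs j (t, ε)) = _
  rw [fPerm_apply, fPerm_apply]
  refine Prod.ext (by dsimp only; group) ?_
  dsimp only [chi]
  rw [simple_conj_eq_iff, add_assoc]

lemma fPerm_mul_pow_apply (i j : B) (n : ℕ) (t : W) (ε : ZMod 2) :
    ((fPerm cs i * fPerm cs j) ^ n) (t, ε)
      = ((cs.simple i * cs.simple j) ^ n * t * (cs.simple j * cs.simple i) ^ n,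
          ε + ∑ a ∈ Finset.range n,
            chi cs i j ((cs.simple i * cs.simple j) ^ a * t * (cs.simple j * cs.simple i) ^ a)) := by
  set c := cs.simple i * cs.simple j
  set d := cs.simple j * cs.simple i
  induction n generalizing t ε with
  | zero => simp
  | succ n ih =>
      rw [pow_succ, Equiv.Perm.mul_apply, fPerm_mul_apply, ih, Finset.sum_range_succ']
      have hfst : ∀ a : ℕ, c ^ a * (c * t * d) * d ^ a = c ^ (a + 1) * t * d ^ (a + 1) := by
        intro a
        rw [pow_succ, pow_succ' d]
        simp only [mul_assoc]
      refine Prod.ext (by dsimp only; rw [hfst]) ?_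
      dsimp only
      simp only [hfst, pow_zero, one_mul, mul_one]
      rw [add_assoc, add_comm (chi cs i j t)]
      congr 2
      exact Finset.sum_congr rfl (fun a _ => congrArg (chi cs i j) (hfst a))

lemma liftable_aux (i j : B) : ((fPerm cs i * fPerm cs j) ^ M i j) = 1 := by
  set c := cs.simple i * cs.simple j with hcdef
  set d := cs.simple j * cs.simple i with hddef
  set m := M i j with hm
  have hc : c ^ m = 1 := cs.simple_mul_simple_pow i j
  have hd : d ^ m = 1 := cs.simple_mul_simple_pow' i j
  apply Equiv.ext
  rintro ⟨t, ε⟩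
  rw [fPerm_mul_pow_apply, hc, hd, one_mul, mul_one, Equiv.Perm.one_apply]
  refine Prod.ext rfl ?_
  dsimp only
  have inv1 : ∀ a : ℕ, (c ^ a)⁻¹ = d ^ a := by
    intro a
    rw [← inv_pow]
    congr 1
    rw [hcdef, hddef, mul_inv_rev, cs.inv_simple, cs.inv_simple]
  have e1 : ∀ a : ℕ, d ^ a * cs.simple j * c ^ a = d ^ (2*a) * cs.simple j :=
    fun a => swap_pow_conj (cs.simple i) (cs.simple j) a
  have e2 : ∀ a : ℕ, d ^ a * (cs.simple j * cs.simple i * cs.simple j) * c ^ a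
      = d ^ (2*a+1) * cs.simple j := by
    intro a
    calc d ^ a * (d * cs.simple j) * c ^ a
        = ((d ^ a * d) * cs.simple j) * c ^ a := by
          rw [mul_assoc (d ^ a) d (cs.simple j)]
      _ = ((d * d ^ a) * cs.simple j) * c ^ a := by rw [← pow_succ, pow_succ']
      _ = d * (d ^ a * cs.simple j * c ^ a) := by
          rw [mul_assoc d (d ^ a) (cs.simple j), mul_assoc d (d ^ a * cs.simple j) (c ^ a)]
      _ = d * (d ^ (2*a) * cs.simple j) := by rw [e1]
      _ = d ^ (2*a+1) * cs.simple j := by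
          rw [pow_succ', mul_assoc d (d ^ (2*a)) (cs.simple j)]
  have key : ∀ a : ℕ, chi cs i j (c ^ a * t * d ^ a)
      = (if t = d ^ (2*a) * cs.simple j then 1 else 0)
        + (if t = d ^ (2*a+1) * cs.simple j then 1 else 0) := by
    intro a
    have conj_iff : ∀ y : W, (c ^ a * t * d ^ a = y) ↔ (t = d ^ a * y * c ^ a) := by
      intro y
      rw [← inv1]
      constructor
      · rintro rfl; group
      · rintro rfl; group
    dsimp only [chi]
    rw [conj_iff, conj_iff, e1, e2]
  show ε + ∑ a ∈ Finset.range m, chi cs i j (c ^ a * t * d ^ a) = ε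
  simp only [key]
  rw [sum_range_pair (fun e => if t = d ^ e * cs.simple j then 1 else 0) m]
  rw [two_mul, sum_range_split]
  have hshift : ∀ e : ℕ, d ^ (m + e) = d ^ e := by
    intro e; rw [pow_add, hd, one_mul]
  simp only [hshift]
  rw [zmod2_add_self, add_zero]

lemma fPerm_isLiftable : M.IsLiftable (fPerm cs) := fun i j => liftable_aux cs i j

/-- The permutation representation of `W` on `W × ZMod 2`. -/
def permRep : W →* Equiv.Perm (W × ZMod 2) := cs.lift ⟨fPerm cs, fPerm_isLiftable cs⟩

lemma permRep_simple (i : B) : permRep cs (cs.simple i) = fPerm cs i :=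
  cs.lift_apply_simple (fPerm_isLiftable cs) i


lemma rightInvSeq_cons' (i : B) (ω : List B) :
    cs.rightInvSeq (i :: ω)
      = ((cs.wordProd ω)⁻¹ * cs.simple i * cs.wordProd ω) :: cs.rightInvSeq ω := rfl

lemma permRep_wordProd (ω : List B) (t : W) (ε : ZMod 2) :
    permRep cs (cs.wordProd ω) (t, ε)
      = (cs.wordProd ω * t * (cs.wordProd ω)⁻¹,
         ε + ((cs.rightInvSeq ω).count t : ZMod 2)) := by
  induction ω with
  | nil => simp [permRep]
  | cons i ω ih =>
      rw [cs.wordProd_cons, map_mul, Equiv.Perm.mul_apply, ih, permRep_simple, fPerm_apply]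
      refine Prod.ext ?_ ?_
      · dsimp only
        rw [mul_inv_rev, cs.inv_simple]
        simp only [mul_assoc]
      · dsimp only
        rw [rightInvSeq_cons', List.count_cons]
        have hiff : (cs.wordProd ω * t * (cs.wordProd ω)⁻¹ = cs.simple i)
            ↔ ((cs.wordProd ω)⁻¹ * cs.simple i * cs.wordProd ω = t) := by
          constructor
          · intro h; rw [← h]; group
          · intro h; rw [← h]; group
        push_cast
        simp only [beq_iff_eq]
        by_cases hcase : (cs.wordProd ω)⁻¹ * cs.simple i * cs.wordProd ω = t
        · rw [if_pos hcase, if_pos (hiff.mpr hcase), add_assoc]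
        · rw [if_neg hcase, if_neg (fun h => hcase (hiff.mp h)), add_zero, add_zero]

lemma count_ris_parity {ω ω' : List B} (h : cs.wordProd ω = cs.wordProd ω') (t : W) :
    ((cs.rightInvSeq ω).count t : ZMod 2) = ((cs.rightInvSeq ω').count t : ZMod 2) := by
  have h1 := permRep_wordProd cs ω t 0
  have h2 := permRep_wordProd cs ω' t 0
  rw [h] at h1
  rw [h1] at h2
  have := congrArg Prod.snd h2
  simpa using this

lemma rightInvSeq_append' (ω₁ ω₂ : List B) :
    cs.rightInvSeq (ω₁ ++ ω₂)
      = (cs.rightInvSeq ω₁).map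
          (fun x => (cs.wordProd ω₂)⁻¹ * x * cs.wordProd ω₂) ++ cs.rightInvSeq ω₂ := by
  induction ω₁ with
  | nil => simp
  | cons i ω₁ ih =>
      rw [List.cons_append, rightInvSeq_cons', rightInvSeq_cons', ih, List.map_cons,
        List.cons_append]
      congr 1
      rw [cs.wordProd_append, mul_inv_rev]
      simp only [mul_assoc]

lemma leftInvSeq_eq_map (ω : List B) :
    cs.leftInvSeq ω = (cs.rightInvSeq ω).map
      (fun x => cs.wordProd ω * x * (cs.wordProd ω)⁻¹) := by
  induction ω with
  | nil => simp
  | cons i ω ih =>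
      show cs.simple i :: List.map (MulAut.conj (cs.simple i)) (cs.leftInvSeq ω) = _
      rw [rightInvSeq_cons', List.map_cons, ih, List.map_map]
      congr 1
      · rw [cs.wordProd_cons, mul_inv_rev, cs.inv_simple]
        have hs := cs.simple_mul_simple_self i
        symm
        calc cs.simple i * cs.wordProd ω
              * ((cs.wordProd ω)⁻¹ * cs.simple i * cs.wordProd ω)
              * ((cs.wordProd ω)⁻¹ * cs.simple i)
            = (cs.simple i * cs.simple i) * cs.simple i := by group
          _ = cs.simple i := by rw [hs, one_mul]
      · apply List.map_congr_left
        intro x _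
        rw [Function.comp_apply, MulAut.conj_apply, cs.wordProd_cons, mul_inv_rev,
          cs.inv_simple]
        simp only [mul_assoc]

lemma count_map_conj (l : List W) (g t : W) :
    (l.map (fun x => g * x * g⁻¹)).count t = l.count (g⁻¹ * t * g) := by
  have hinj : Function.Injective (fun x : W => g * x * g⁻¹) := by
    intro a b hab
    dsimp only at hab
    calc a = g⁻¹ * (g * a * g⁻¹) * g := by group
      _ = g⁻¹ * (g * b * g⁻¹) * g := by rw [hab]
      _ = b := by group
  have ht : t = (fun x : W => g * x * g⁻¹) (g⁻¹ * t * g) := by dsimp only; group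
  rw [ht, List.count_map_of_injective _ _ hinj]
  dsimp only
  congr 1 <;> group

/-- The parity of the number of times `t` occurs in the right inversion sequence of
(any) word for `w`. -/
def eta (w t : W) : ZMod 2 :=
  ((cs.rightInvSeq (Classical.choose (cs.exists_reduced_word w))).count t : ZMod 2)

lemma eta_eq {w : W} {ω : List B} (h : cs.wordProd ω = w) (t : W) :
    eta cs w t = ((cs.rightInvSeq ω).count t : ZMod 2) := by
  have hspec := Classical.choose_spec (cs.exists_reduced_word w)
  exact count_ris_parity cs (by rw [← hspec.2, h]) t

lemma triple_simple (i : B) :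
    cs.simple i * cs.simple i * cs.simple i = cs.simple i := by
  rw [cs.simple_mul_simple_self, one_mul]

lemma eta_mul_reflection (w t : W) (ht : cs.IsReflection t) :
    eta cs (w * t) t = eta cs w t + 1 := by
  obtain ⟨u, i, hti⟩ := ht
  obtain ⟨υ, -, hυ⟩ := cs.exists_reduced_word u
  obtain ⟨ω, -, hω⟩ := cs.exists_reduced_word w
  -- the word τ represents t
  set τ : List B := υ ++ i :: υ.reverse with hτdef
  have hπτ : cs.wordProd τ = t := by
    rw [hτdef, cs.wordProd_append, cs.wordProd_cons, cs.wordProd_reverse, hti, ← hυ,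
      mul_assoc]
  have hπωτ : cs.wordProd (ω ++ τ) = w * t := by
    rw [cs.wordProd_append, hπτ, ← hω]
  -- count in ris τ
  have hcount_τ : ((cs.rightInvSeq τ).count t : ZMod 2) = 1 := by
    rw [hτdef, rightInvSeq_append', rightInvSeq_cons', List.count_append, List.count_cons]
    have hhead : (cs.wordProd υ.reverse)⁻¹ * cs.simple i * cs.wordProd υ.reverse = t := by
      rw [cs.wordProd_reverse, inv_inv, ← hυ, hti]
    rw [hhead]
    simp only [beq_self_eq_true, if_true]
    -- first part: count in conjugated ris υ
    have h1 : ((cs.rightInvSeq υ).map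
        (fun x => (cs.wordProd (i :: υ.reverse))⁻¹ * x * cs.wordProd (i :: υ.reverse))).count t
        = (cs.rightInvSeq υ).count (cs.simple i) := by
      have hg : (fun x : W => (cs.wordProd (i :: υ.reverse))⁻¹ * x * cs.wordProd (i :: υ.reverse))
          = (fun x : W => (cs.wordProd (i :: υ.reverse))⁻¹ * x
              * ((cs.wordProd (i :: υ.reverse))⁻¹)⁻¹) := by
        funext x; rw [inv_inv]
      rw [hg, count_map_conj]
      congr 1
      rw [inv_inv, cs.wordProd_cons, cs.wordProd_reverse, ← hυ, hti]
      group
    -- second part: count in ris of the reversed word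
    have h2 : (cs.rightInvSeq υ.reverse).count t = (cs.rightInvSeq υ).count (cs.simple i) := by
      rw [cs.rightInvSeq_reverse, List.count_reverse, leftInvSeq_eq_map, count_map_conj]
      congr 1
      rw [← hυ, hti]
      group
    rw [h1, h2]
    push_cast
    rw [← add_assoc, zmod2_add_self, zero_add]
  -- put it together
  rw [eta_eq cs hπωτ t, eta_eq cs hω.symm t, rightInvSeq_append', List.count_append]
  push_cast
  rw [hcount_τ]
  congr 1
  have hg : (fun x : W => (cs.wordProd τ)⁻¹ * x * cs.wordProd τ)
      = (fun x : W => (cs.wordProd τ)⁻¹ * x * ((cs.wordProd τ)⁻¹)⁻¹) := by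
    funext x; rw [inv_inv]
  rw [hg, count_map_conj]
  congr 2
  rw [inv_inv, hπτ]
  group

lemma length_lt_of_eta_eq_one {w t : W} (h : eta cs w t = 1) :
    cs.length (w * t) < cs.length w := by
  obtain ⟨ω₀, hlen, hw⟩ := cs.exists_reduced_word w
  have hred : cs.IsReduced ω₀ := hlen
  have hmem : t ∈ cs.rightInvSeq ω₀ := by
    by_contra hmem
    rw [eta_eq cs hw.symm t, List.count_eq_zero.mpr hmem, Nat.cast_zero] at h
    exact absurd h (by decide)
  have h2 := cs.isRightInversion_of_mem_rightInvSeq hred hmem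
  rw [← hw] at h2
  exact h2.2

lemma eta_eq_one_of_length_lt {w t : W} (ht : cs.IsReflection t)
    (hlt : cs.length (w * t) < cs.length w) : eta cs w t = 1 := by
  rcases (by decide : ∀ x : ZMod 2, x = 0 ∨ x = 1) (eta cs w t) with h0 | h1
  · exfalso
    have h1' : eta cs (w * t) t = 1 := by rw [eta_mul_reflection cs w t ht, h0, zero_add]
    have h2 := length_lt_of_eta_eq_one cs h1'
    rw [mul_assoc, ht.mul_self, mul_one] at h2
    omega
  · exact h1

/-- The strong exchange property. -/
lemma strong_exchange {ω : List B} (hred : cs.IsReduced ω) {t : W} (ht : cs.IsReflection t)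
    (hlt : cs.length (cs.wordProd ω * t) < cs.length (cs.wordProd ω)) :
    ∃ j < ω.length, cs.wordProd (ω.eraseIdx j) = cs.wordProd ω * t := by
  have h1 := eta_eq_one_of_length_lt cs ht hlt
  have hmem : t ∈ cs.rightInvSeq ω := by
    by_contra hmem
    rw [eta_eq cs rfl t, List.count_eq_zero.mpr hmem, Nat.cast_zero] at h1
    exact absurd h1 (by decide)
  obtain ⟨j, hj, hget⟩ := List.mem_iff_getElem.mp hmem
  rw [cs.length_rightInvSeq] at hj
  refine ⟨j, hj, ?_⟩
  rw [← cs.wordProd_mul_getD_rightInvSeq ω j]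
  congr 1
  rw [List.getD_eq_getElem _ 1 (by rw [cs.length_rightInvSeq]; exact hj)]
  exact hget

/-! ### Basic properties of the Bruhat order -/

lemma bruhat_step {u t : W} (ht : cs.IsReflection t)
    (hlt : cs.length u < cs.length (u * t)) :
    Relation.ReflTransGen
      (fun a b => (∃ t, cs.IsReflection t ∧ b = a * t) ∧ cs.length a < cs.length b) u (u * t) :=
  Relation.ReflTransGen.single ⟨⟨t, ht, rfl⟩, hlt⟩

lemma bruhat_length_le {u v : W}
    (h : Relation.ReflTransGen
      (fun a b => (∃ t, cs.IsReflection t ∧ b = a * t) ∧ cs.length a < cs.length b) u v) :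
    cs.length u ≤ cs.length v := by
  induction h with
  | refl => exact le_refl _
  | tail _ hbc ih => exact ih.trans (le_of_lt hbc.2)

lemma bruhat_inv {u v : W}
    (h : Relation.ReflTransGen
      (fun a b => (∃ t, cs.IsReflection t ∧ b = a * t) ∧ cs.length a < cs.length b) u v) :
    Relation.ReflTransGen
      (fun a b => (∃ t, cs.IsReflection t ∧ b = a * t) ∧ cs.length a < cs.length b) u⁻¹ v⁻¹ := by
  induction h with
  | refl => exact Relation.ReflTransGen.refl
  | @tail b c _ hbc ih =>
      obtain ⟨⟨t, ht, hc⟩, hlen⟩ := hbc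
      refine ih.tail ⟨⟨b * t * b⁻¹, ht.conj b, ?_⟩, ?_⟩
      · rw [hc, mul_inv_rev, ht.inv]
        group
      · rw [cs.length_inv, cs.length_inv]
        exact hlen

lemma BruhatLE.refl' (u : W) : BruhatLE cs u u := Relation.ReflTransGen.refl

lemma BruhatLE.trans' {a b c : W} (h1 : BruhatLE cs a b) (h2 : BruhatLE cs b c) :
    BruhatLE cs a c := Relation.ReflTransGen.trans h1 h2

lemma bruhat_single {u t : W} (ht : cs.IsReflection t)
    (hlt : cs.length u < cs.length (u * t)) : BruhatLE cs u (u * t) :=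
  bruhat_step cs ht hlt

lemma bruhat_le_length_le {u v : W} (h : BruhatLE cs u v) : cs.length u ≤ cs.length v :=
  bruhat_length_le cs h

lemma bruhat_le_inv {u v : W} (h : BruhatLE cs u v) : BruhatLE cs u⁻¹ v⁻¹ :=
  bruhat_inv cs h

lemma eraseIdx_append_left {α : Type*} : ∀ (l1 l2 : List α) (j : ℕ), j < l1.length →
    (l1 ++ l2).eraseIdx j = l1.eraseIdx j ++ l2 := by
  intro l1
  induction l1 with
  | nil => intro l2 j hj; simp at hj
  | cons a l1 ih =>
      intro l2 j hj
      cases j with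
      | zero => simp [List.eraseIdx]
      | succ j =>
          simp only [List.cons_append, List.eraseIdx_cons_succ, List.cons_append]
          rw [ih l2 j (by simpa using hj)]

lemma eraseIdx_concat_last {α : Type*} : ∀ (l1 : List α) (a : α),
    (l1 ++ [a]).eraseIdx l1.length = l1 := by
  intro l1
  induction l1 with
  | nil => intro a; simp [List.eraseIdx]
  | cons b l1 ih =>
      intro a
      simp only [List.cons_append, List.length_cons, List.eraseIdx_cons_succ]
      rw [ih a]

lemma simple_conj_reflection {t : W} (ht : cs.IsReflection t) (i : B) :
    cs.IsReflection (cs.simple i * t * cs.simple i) := by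
  have h := ht.conj (cs.simple i)
  rwa [cs.inv_simple] at h

lemma conj_step_eq {v t : W} (i : B) :
    (v * cs.simple i) * (cs.simple i * t * cs.simple i) = (v * t) * cs.simple i := by
  have hs := cs.simple_mul_simple_self i
  calc (v * cs.simple i) * (cs.simple i * t * cs.simple i)
      = v * (cs.simple i * cs.simple i) * (t * cs.simple i) := by group
    _ = (v * t) * cs.simple i := by rw [hs, mul_one, mul_assoc]

/-- Key one-step lemma: if `v → w` is a Bruhat step and `s i` is a right descent of `w`,
then `v ≤ w * s i` or `v * s i ≤ w * s i`. -/
lemma claimA {v w t : W} (ht : cs.IsReflection t) (hw : w = v * t)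
    (hlen : cs.length v < cs.length w) (i : B)
    (hdesc : cs.length (w * cs.simple i) < cs.length w) :
    BruhatLE cs v (w * cs.simple i) ∨ BruhatLE cs (v * cs.simple i) (w * cs.simple i) := by
  have hws : cs.length (w * cs.simple i) + 1 = cs.length w := by
    rcases cs.length_mul_simple w i with h | h
    · omega
    · exact h
  rcases Nat.lt_or_ge (cs.length (v * cs.simple i)) (cs.length v) with hlt | hge
  · -- descent of v as well: single step from v * s i
    right
    have heq : w * cs.simple i = (v * cs.simple i) * (cs.simple i * t * cs.simple i) := by
      rw [conj_step_eq, ← hw]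
    rw [heq]
    refine bruhat_single cs (simple_conj_reflection cs ht i) ?_
    rw [← heq]
    omega
  · have hvs : cs.length v < cs.length (v * cs.simple i) :=
      lt_of_le_of_ne hge (Ne.symm (cs.length_mul_simple_ne v i))
    obtain ⟨ω₁, hlen₁, heq₁⟩ := cs.exists_reduced_word (w * cs.simple i)
    have hπω : cs.wordProd (ω₁ ++ [i]) = w := by
      rw [cs.wordProd_append, ← heq₁]
      have : cs.wordProd [i] = cs.simple i := by
        rw [show [i] = i :: ([] : List B) from rfl, cs.wordProd_cons, cs.wordProd_nil, mul_one]
      rw [this, mul_assoc, cs.simple_mul_simple_self, mul_one]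
    have hwt : cs.length (w * t) < cs.length w := by
      have hwt' : w * t = v := by rw [hw, mul_assoc, ht.mul_self, mul_one]
      rw [hwt']
      exact hlen
    obtain ⟨j, hj, hjeq⟩ := strong_exchange cs
      (by rw [CoxeterSystem.IsReduced, hπω, List.length_append, List.length_singleton,
            ← (show cs.length (cs.wordProd ω₁) = ω₁.length from hlen₁), ← heq₁]
          omega)
      ht (by rw [hπω]; exact hwt)
    have hv : cs.wordProd ((ω₁ ++ [i]).eraseIdx j) = v := by
      rw [hjeq, hπω, hw, mul_assoc, ht.mul_self, mul_one]
    rw [List.length_append, List.length_singleton] at hj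
    rcases Nat.lt_or_ge j ω₁.length with hjlt | hjge
    · -- j hits ω₁ : get v * s i ≤ w * s i
      right
      have herase : (ω₁ ++ [i]).eraseIdx j = ω₁.eraseIdx j ++ [i] :=
        eraseIdx_append_left ω₁ [i] j hjlt
      have hvs' : cs.wordProd (ω₁.eraseIdx j) = v * cs.simple i := by
        have h1 : cs.wordProd (ω₁.eraseIdx j ++ [i]) = v := by rw [← herase]; exact hv
        rw [cs.wordProd_append] at h1
        have : cs.wordProd [i] = cs.simple i := by
          rw [show [i] = i :: ([] : List B) from rfl, cs.wordProd_cons, cs.wordProd_nil, mul_one]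
        rw [this] at h1
        rw [← h1, mul_assoc, cs.simple_mul_simple_self, mul_one]
      set r := (cs.rightInvSeq ω₁).getD j 1 with hr
      have hrmem : r ∈ cs.rightInvSeq ω₁ := by
        rw [hr, List.getD_eq_getElem _ 1 (by rw [cs.length_rightInvSeq]; exact hjlt)]
        exact List.getElem_mem _
      have hrrefl : cs.IsReflection r := cs.isReflection_of_mem_rightInvSeq ω₁ hrmem
      have hkey : (w * cs.simple i) * r = v * cs.simple i := by
        rw [← hvs', heq₁, hr]
        exact cs.wordProd_mul_getD_rightInvSeq ω₁ j
      have hkey2 : w * cs.simple i = (v * cs.simple i) * r := by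
        rw [← hkey, mul_assoc, hrrefl.mul_self, mul_one]
      have hlenvs : cs.length (v * cs.simple i) < cs.length (w * cs.simple i) := by
        have h2 : cs.length (v * cs.simple i) ≤ (ω₁.eraseIdx j).length := by
          rw [← hvs']; exact cs.length_wordProd_le _
        have h3 : (ω₁.eraseIdx j).length + 1 = ω₁.length :=
          List.length_eraseIdx_add_one hjlt
        have h4 : cs.length (w * cs.simple i) = ω₁.length := by rw [heq₁]; exact hlen₁
        omega
      rw [hkey2]
      refine bruhat_single cs hrrefl ?_
      rw [← hkey2]
      exact hlenvs
    · -- j is the last letter: v = w * s i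
      left
      have hj' : j = ω₁.length := by omega
      have hveq : v = w * cs.simple i := by
        rw [← hv, hj', eraseIdx_concat_last, heq₁]
      rw [hveq]
      exact BruhatLE.refl' cs _

/-- The right lifting property. -/
lemma lifting_right {v w : W} (h : BruhatLE cs v w) (i : B)
    (hdesc : cs.length (w * cs.simple i) < cs.length w) :
    BruhatLE cs v (w * cs.simple i) ∨ BruhatLE cs (v * cs.simple i) (w * cs.simple i) := by
  induction h using Relation.ReflTransGen.head_induction_on with
  | refl => right; exact BruhatLE.refl' cs _
  | head hab hbw ih =>
      rename_i a b
      obtain ⟨⟨t, ht, hb⟩, hlenab⟩ := hab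
      rcases ih with h1 | h2
      · left
        exact BruhatLE.trans' cs (Relation.ReflTransGen.single ⟨⟨t, ht, hb⟩, hlenab⟩) h1
      · rcases Nat.lt_or_ge (cs.length (b * cs.simple i)) (cs.length b) with hlt | hge
        · rcases claimA cs ht hb hlenab i hlt with hA | hB
          · left; exact BruhatLE.trans' cs hA h2
          · right; exact BruhatLE.trans' cs hB h2
        · have hgt : cs.length b < cs.length (b * cs.simple i) :=
            lt_of_le_of_ne hge (Ne.symm (cs.length_mul_simple_ne b i))
          left
          have step1 : BruhatLE cs a b := Relation.ReflTransGen.single ⟨⟨t, ht, hb⟩, hlenab⟩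
          have step2 : BruhatLE cs b (b * cs.simple i) :=
            bruhat_single cs (cs.isReflection_simple i) hgt
          exact BruhatLE.trans' cs step1 (BruhatLE.trans' cs step2 h2)

/-- Right multiplication by a simple reflection that increases length is monotone. -/
lemma mul_simple_mono_aux : ∀ n : ℕ, ∀ u y : W, cs.length y ≤ n → BruhatLE cs u y →
    ∀ i : B, cs.length y < cs.length (y * cs.simple i) →
    BruhatLE cs (u * cs.simple i) (y * cs.simple i) := by
  intro n
  induction n with
  | zero =>
      intro u y hyn h i _
      have hu : cs.length u = 0 := Nat.le_antisymm
        (le_trans (bruhat_le_length_le cs h) hyn) (Nat.zero_le _)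
      have hy : cs.length y = 0 := Nat.le_antisymm hyn (Nat.zero_le _)
      rw [cs.length_eq_zero_iff] at hu hy
      rw [hu, hy]
      exact BruhatLE.refl' cs _
  | succ n ih =>
      intro u y hyn h i hasc
      rcases Relation.ReflTransGen.cases_tail h with heq | ⟨c, huc, hcy⟩
      · rw [heq]
        exact BruhatLE.refl' cs _
      · obtain ⟨⟨t, ht, hy⟩, hlency⟩ := hcy
        -- step from c * s i to y * s i
        have heq2 : y * cs.simple i = (c * cs.simple i) * (cs.simple i * t * cs.simple i) := by
          rw [conj_step_eq, ← hy]
        have hlencsys : cs.length (c * cs.simple i) < cs.length (y * cs.simple i) := by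
          have h1 : cs.length (c * cs.simple i) ≤ cs.length c + 1 := by
            have := cs.length_mul_le c (cs.simple i)
            rwa [cs.length_simple] at this
          omega
        have hcy' : BruhatLE cs (c * cs.simple i) (y * cs.simple i) := by
          rw [heq2]
          refine bruhat_single cs (simple_conj_reflection cs ht i) ?_
          rw [← heq2]
          exact hlencsys
        rcases Nat.lt_or_ge (cs.length (c * cs.simple i)) (cs.length c) with hlt | hge
        · rcases lifting_right cs huc i hlt with hL | hR
          · -- u ≤ c * s i ; apply ih at c * s i
            have hback : (c * cs.simple i) * cs.simple i = c := by
              rw [mul_assoc, cs.simple_mul_simple_self, mul_one]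
            have hih := ih u (c * cs.simple i) (by omega) hL i (by rw [hback]; exact hlt)
            rw [hback] at hih
            -- u * s i ≤ c ≤ y ≤ y * s i
            have hc_y : BruhatLE cs c y := Relation.ReflTransGen.single ⟨⟨t, ht, hy⟩, hlency⟩
            have hy_ys : BruhatLE cs y (y * cs.simple i) :=
              bruhat_single cs (cs.isReflection_simple i) hasc
            exact BruhatLE.trans' cs hih (BruhatLE.trans' cs hc_y hy_ys)
          · exact BruhatLE.trans' cs hR hcy'
        · have hgt : cs.length c < cs.length (c * cs.simple i) :=
            lt_of_le_of_ne hge (Ne.symm (cs.length_mul_simple_ne c i))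
          have hih := ih u c (by omega) huc i hgt
          exact BruhatLE.trans' cs hih hcy'

lemma mul_simple_mono {u y : W} (h : BruhatLE cs u y) (i : B)
    (hasc : cs.length y < cs.length (y * cs.simple i)) :
    BruhatLE cs (u * cs.simple i) (y * cs.simple i) :=
  mul_simple_mono_aux cs (cs.length y) u y (le_refl _) h i hasc

/-- The left lifting property. -/
lemma lifting_left {v w : W} (h : BruhatLE cs v w) (i : B)
    (hdesc : cs.length (cs.simple i * w) < cs.length w) :
    BruhatLE cs v (cs.simple i * w) ∨ BruhatLE cs (cs.simple i * v) (cs.simple i * w) := by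
  have hwinv : w⁻¹ * cs.simple i = (cs.simple i * w)⁻¹ := by
    rw [mul_inv_rev, cs.inv_simple]
  have hdesc' : cs.length (w⁻¹ * cs.simple i) < cs.length w⁻¹ := by
    rw [hwinv, cs.length_inv, cs.length_inv]
    exact hdesc
  rcases lifting_right cs (bruhat_le_inv cs h) i hdesc' with h1 | h2
  · left
    have h3 := bruhat_le_inv cs h1
    rwa [inv_inv, hwinv, inv_inv] at h3
  · right
    have hvinv : v⁻¹ * cs.simple i = (cs.simple i * v)⁻¹ := by
      rw [mul_inv_rev, cs.inv_simple]
    rw [hvinv, hwinv] at h2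
    have h3 := bruhat_le_inv cs h2
    rwa [inv_inv, inv_inv] at h3

lemma main_aux : ∀ n : ℕ, ∀ x v w z : W, cs.length x ≤ n → BruhatLE cs v w → w = x * z →
    cs.length w = cs.length x + cs.length z →
    ∃ x', BruhatLE cs x' x⁻¹ ∧ BruhatLE cs (x' * v) z := by
  intro n
  induction n with
  | zero =>
      intro x v w z hxn h hw hl
      have hx : x = 1 := by rw [← cs.length_eq_zero_iff]; omega
      refine ⟨1, ?_, ?_⟩
      · rw [hx, inv_one]
        exact BruhatLE.refl' cs _
      · rw [one_mul]
        have hwz : w = z := by rw [hw, hx, one_mul]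
        rwa [← hwz]
  | succ n ih =>
      intro x v w z hxn h hw hl
      by_cases hx0 : cs.length x = 0
      · have hx : x = 1 := by rw [← cs.length_eq_zero_iff]; omega
        refine ⟨1, ?_, ?_⟩
        · rw [hx, inv_one]
          exact BruhatLE.refl' cs _
        · rw [one_mul]
          have hwz : w = z := by rw [hw, hx, one_mul]
          rwa [← hwz]
      · have hxne : x ≠ 1 := fun hx1 => hx0 (by rw [hx1, cs.length_one])
        obtain ⟨i, hdesc⟩ := cs.exists_leftDescent_of_ne_one hxne
        have hdesc' : cs.length (cs.simple i * x) < cs.length x := hdesc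
        set x₁ := cs.simple i * x with hx₁
        have hxx : x = cs.simple i * x₁ := by
          rw [hx₁, ← mul_assoc, cs.simple_mul_simple_self, one_mul]
        have hlenx₁ : cs.length x₁ + 1 = cs.length x := by
          rcases cs.length_simple_mul x i with hh | hh
          · rw [← hx₁] at hh; omega
          · rw [← hx₁] at hh; exact hh
        set w₁ := x₁ * z with hw₁
        have hww : w = cs.simple i * w₁ := by rw [hw₁, ← mul_assoc, ← hxx, hw]
        have hw₁w : w₁ = cs.simple i * w := by
          rw [hww, ← mul_assoc, cs.simple_mul_simple_self, one_mul]
        have hup : cs.length w₁ ≤ cs.length x₁ + cs.length z := by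
          rw [hw₁]; exact cs.length_mul_le x₁ z
        have hdown : cs.length w₁ = cs.length w + 1 ∨ cs.length w₁ + 1 = cs.length w := by
          rw [hw₁w]; exact cs.length_simple_mul w i
        have hlw₁ : cs.length w₁ = cs.length x₁ + cs.length z := by omega
        have hdescw : cs.length (cs.simple i * w) < cs.length w := by
          rw [← hw₁w]; omega
        -- the key length fact for x
        have hxinv : x⁻¹ = x₁⁻¹ * cs.simple i := by
          rw [hxx, mul_inv_rev, cs.inv_simple]
        have hxinvlen : cs.length x₁⁻¹ < cs.length (x₁⁻¹ * cs.simple i) := by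
          rw [← hxinv, cs.length_inv, cs.length_inv]
          omega
        rcases lifting_left cs h i hdescw with hL | hR
        · -- v ≤ w₁
          rw [← hw₁w] at hL
          obtain ⟨x', hx'1, hx'2⟩ := ih x₁ v w₁ z (by omega) hL hw₁ hlw₁
          refine ⟨x', ?_, hx'2⟩
          have hstep : BruhatLE cs x₁⁻¹ (x₁⁻¹ * cs.simple i) :=
            bruhat_single cs (cs.isReflection_simple i) hxinvlen
          rw [hxinv]
          exact BruhatLE.trans' cs hx'1 hstep
        · -- s i * v ≤ w₁
          rw [← hw₁w] at hR
          obtain ⟨x', hx'1, hx'2⟩ := ih x₁ (cs.simple i * v) w₁ z (by omega) hR hw₁ hlw₁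
          refine ⟨x' * cs.simple i, ?_, ?_⟩
          · have hmono := mul_simple_mono cs hx'1 i hxinvlen
            rw [hxinv]
            exact hmono
          · rw [mul_assoc]
            exact hx'2


end

end Aux

/-- Second lifting lemma: if `v ≤ w` and `w = x * z` reduced, then there is
`x' ≤ x⁻¹` with `x' * v ≤ z`. -/
theorem lifting_two_left (cs : CoxeterSystem M W) (v w x z : W) (h : BruhatLE cs v w)
    (hw : w = x * z) (hl : cs.length w = cs.length x + cs.length z) :
    ∃ x', BruhatLE cs x' x⁻¹ ∧ BruhatLE cs (x' * v) z := by
  exact main_aux cs (cs.length x) x v w z (le_refl _) h hw hl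

end CoxeterPaper
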